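/- arXiv:2412.00778 — 2 statements merged into one kernel-verified Lean document; each statement's English description precedes it below -/
import Mathlib

section
/- Lemma 4. Let λ_1, …, λ_N ∈ ℂ have positive real parts, let ν ∈ ℂ, and let Γ′ be the additive semigroup generated by 1, λ_1, …, λ_N. Then there exists a finitely generated additive semigroup Γ″ ⊂ ℂ, all of whose generators have positive real part, such that every element of the set −λ_N − ν + Γ′ having positive real part belongs to Γ″. (Consequently, in Lemmas 2 and 3 the coefficients a_p belong to ℂ{x^{Γ″}}.) -/
noncomputable section

/-- Membership in the additive semigroup generated by `g 0, …, g (τ-1)`. -/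
def InSemigroup {τ : ℕ} (g : Fin τ → ℂ) (z : ℂ) : Prop :=
  ∃ m : Fin τ → ℕ, m ≠ 0 ∧ z = ∑ i, (m i : ℂ) * g i

/-- Membership in the additive semigroup `Γ'` generated by `1, λ_1, …, λ_N`. -/
def InGammaPrime {N : ℕ} (lam : Fin N → ℂ) (z : ℂ) : Prop :=
  ∃ (m0 : ℕ) (m : Fin N → ℕ), ¬(m0 = 0 ∧ m = 0) ∧
    z = (m0 : ℂ) + ∑ k, (m k : ℂ) * lam k

lemma insg_gen {τ : ℕ} (g : Fin τ → ℂ) (i0 : Fin τ) : InSemigroup g (g i0) := by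
  refine ⟨Pi.single i0 1, ?_, ?_⟩
  · intro h
    have := congrFun h i0
    simp [Pi.single_eq_same] at this
  · rw [Fintype.sum_eq_single i0]
    · simp
    · intro j hj
      simp [Pi.single_eq_of_ne hj]

lemma insg_add {τ : ℕ} {g : Fin τ → ℂ} {a b : ℂ}
    (ha : InSemigroup g a) (hb : InSemigroup g b) : InSemigroup g (a + b) := by
  obtain ⟨ma, hma, rfl⟩ := ha
  obtain ⟨mb, hmb, rfl⟩ := hb
  refine ⟨ma + mb, ?_, ?_⟩
  · intro h
    apply hma
    funext i
    have := congrFun h i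
    simpa using (by simpa using this : ma i + mb i = 0).symm ▸ (Nat.eq_zero_of_add_eq_zero_right (by simpa using this) : ma i = 0)
  · rw [← Finset.sum_add_distrib]
    refine Finset.sum_congr rfl fun i _ => ?_
    simp only [Pi.add_apply]
    push_cast
    ring

/-- **Lemma 4.**  Let `λ_1, …, λ_N` have positive real parts, `ν ∈ ℂ`, and let `Γ'`
be the additive semigroup generated by `1, λ_1, …, λ_N`.  Then there is a finitely
generated additive semigroup `Γ''`, all of whose generators have positive real part,
containing every element of `-λ_N - ν + Γ'` that has positive real part. -/
theorem lemma4_semigroup {N : ℕ} (hN : 0 < N) (lam : Fin N → ℂ)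
    (hre : ∀ k, 0 < (lam k).re) (nu : ℂ) :
    ∃ τ : ℕ, ∃ g : Fin τ → ℂ, (∀ i, 0 < (g i).re) ∧
      ∀ z : ℂ, InGammaPrime lam z →
        0 < (-(lam ⟨N - 1, Nat.sub_lt hN one_pos⟩) - nu + z).re →
        InSemigroup g (-(lam ⟨N - 1, Nat.sub_lt hN one_pos⟩) - nu + z) := by
  haveI : Nonempty (Fin N) := ⟨⟨0, hN⟩⟩
  set c : ℂ := -(lam ⟨N - 1, Nat.sub_lt hN one_pos⟩) - nu with hc
  set v : ℕ → (Fin N → ℕ) → ℂ := fun m0 m => c + m0 + ∑ k, (m k : ℂ) * lam k with hv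
  have hvre : ∀ m0 m, (v m0 m).re = c.re + m0 + ∑ k, (m k : ℝ) * (lam k).re := by
    intro m0 m
    simp [hv, Complex.add_re, Complex.mul_re]
  set ε : ℝ := Finset.univ.inf' Finset.univ_nonempty (fun k => (lam k).re) with hε
  have hεpos : 0 < ε := by
    rw [hε, Finset.lt_inf'_iff]
    intro k _
    exact hre k
  have hεle : ∀ k, ε ≤ (lam k).re := fun k =>
    Finset.inf'_le _ (Finset.mem_univ k)
  set L : ℝ := max 1 (Finset.univ.sup' Finset.univ_nonempty (fun k => (lam k).re)) with hL
  have hL1 : 1 ≤ L := le_max_left _ _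
  have hLlam : ∀ k, (lam k).re ≤ L :=
    fun k => le_trans (Finset.le_sup' (fun k => (lam k).re) (Finset.mem_univ k)) (le_max_right _ _)
  set B : ℝ := |c.re| with hB
  set K : ℕ := ⌈L + B⌉₊ + ⌈(L + B) / ε⌉₊ + 2 with hK
  have hK2 : 2 ≤ K := by omega
  -- generator set
  set box : Finset (ℕ × (Fin N → ℕ)) :=
    (Finset.range K) ×ˢ (Fintype.piFinset fun _ : Fin N => Finset.range K) with hbox
  set cand : Finset ℂ :=
    (box.image fun p => v p.1 p.2).filter (fun z => 0 < z.re) with hcand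
  set G : Finset ℂ := insert 1 (Finset.image lam Finset.univ ∪ cand) with hG
  have hGpos : ∀ z ∈ G, 0 < z.re := by
    intro z hz
    rw [hG, Finset.mem_insert] at hz
    rcases hz with rfl | hz
    · norm_num
    rw [Finset.mem_union] at hz
    rcases hz with hz | hz
    · obtain ⟨k, _, rfl⟩ := Finset.mem_image.mp hz
      exact hre k
    · exact (Finset.mem_filter.mp hz).2
  set g : Fin G.card → ℂ := fun i => ((G.equivFin.symm i : G) : ℂ) with hg
  have hmemG : ∀ z ∈ G, InSemigroup g z := by
    intro z hz
    have h1 : g (G.equivFin ⟨z, hz⟩) = z := by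
      simp [hg]
    have := insg_gen g (G.equivFin ⟨z, hz⟩)
    rwa [h1] at this
  refine ⟨G.card, g, fun i => hGpos _ (Subtype.mem _), ?_⟩
  -- membership of v in candidates given bounds
  have hmemcand : ∀ m0 m, m0 < K → (∀ k, m k < K) → 0 < (v m0 m).re →
      InSemigroup g (v m0 m) := by
    intro m0 m h0 hk hpos
    apply hmemG
    rw [hG]
    apply Finset.mem_insert_of_mem
    apply Finset.mem_union_right
    rw [hcand, Finset.mem_filter]
    refine ⟨Finset.mem_image.mpr ⟨(m0, m), ?_, rfl⟩, hpos⟩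
    rw [hbox, Finset.mem_product]
    exact ⟨Finset.mem_range.mpr h0, Fintype.mem_piFinset.mpr fun k => Finset.mem_range.mpr (hk k)⟩
  -- nonnegativity of the sum
  have hsum_nonneg : ∀ m : Fin N → ℕ, (0:ℝ) ≤ ∑ k, (m k : ℝ) * (lam k).re := by
    intro m
    exact Finset.sum_nonneg fun k _ => mul_nonneg (Nat.cast_nonneg _) (le_of_lt (hre k))
  have hterm_le : ∀ (m : Fin N → ℕ) (j : Fin N),
      (m j : ℝ) * (lam j).re ≤ ∑ k, (m k : ℝ) * (lam k).re := by
    intro m j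
    exact Finset.single_le_sum (fun k _ => mul_nonneg (Nat.cast_nonneg _) (le_of_lt (hre k)))
      (Finset.mem_univ j)
  -- main induction
  have key : ∀ n : ℕ, ∀ m0 : ℕ, ∀ m : Fin N → ℕ, m0 + ∑ k, m k = n →
      ¬(m0 = 0 ∧ m = 0) → 0 < (v m0 m).re → InSemigroup g (v m0 m) := by
    intro n
    induction n using Nat.strong_induction_on with
    | _ n ih =>
      intro m0 m hn hne hpos
      by_cases hsmall : (v m0 m).re ≤ L
      · -- bounded case: directly a candidate
        apply hmemcand m0 m ?_ ?_ hpos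
        · -- m0 < K
          have h1 : (m0 : ℝ) + ∑ k, (m k : ℝ) * (lam k).re ≤ L + B := by
            have := hvre m0 m
            have hcre : -B ≤ c.re := neg_abs_le _
            nlinarith [hsum_nonneg m]
          have h2 : (m0 : ℝ) ≤ L + B := le_trans (by nlinarith [hsum_nonneg m]) h1
          have h3 : (m0 : ℝ) ≤ (⌈L + B⌉₊ : ℝ) := le_trans h2 (Nat.le_ceil _)
          have h4 : m0 ≤ ⌈L + B⌉₊ := by exact_mod_cast h3
          omega
        · intro k
          have h1 : (m0 : ℝ) + ∑ j, (m j : ℝ) * (lam j).re ≤ L + B := by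
            have := hvre m0 m
            have hcre : -B ≤ c.re := neg_abs_le _
            nlinarith [hsum_nonneg m]
          have h2 : (m k : ℝ) * ε ≤ L + B := by
            have := hterm_le m k
            have := hεle k
            nlinarith [Nat.cast_nonneg (α := ℝ) m0, Nat.cast_nonneg (α := ℝ) (m k)]
          have h3 : (m k : ℝ) ≤ (L + B) / ε := by
            rw [le_div_iff₀ hεpos]; exact h2
          have h4 : (m k : ℝ) ≤ (⌈(L + B) / ε⌉₊ : ℝ) := le_trans h3 (Nat.le_ceil _)
          have h5 : m k ≤ ⌈(L + B) / ε⌉₊ := by exact_mod_cast h4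
          omega
      · push_neg at hsmall
        by_cases h0 : m0 = 0
        · -- peel off some lam j
          subst h0
          have hmne : m ≠ 0 := fun h => hne ⟨rfl, h⟩
          have : ∃ j, m j ≠ 0 := by
            by_contra h
            push_neg at h
            exact hmne (funext fun j => h j)
          obtain ⟨j, hj⟩ := this
          set m' : Fin N → ℕ := fun k => if k = j then m k - 1 else m k with hm'
          have hsplit : v 0 m = lam j + v 0 m' := by
            rw [hv]
            simp only
            have : (∑ k, (m k : ℂ) * lam k) = lam j + ∑ k, (m' k : ℂ) * lam k := by
              rw [← Finset.add_sum_erase _ _ (Finset.mem_univ j),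
                  ← Finset.add_sum_erase _ (fun k => (m' k : ℂ) * lam k) (Finset.mem_univ j)]
              have hmj : (m j : ℂ) = (m' j : ℂ) + 1 := by
                rw [hm']
                simp only [if_pos rfl]
                have h1 : (m j - 1) + 1 = m j := Nat.sub_add_cancel (Nat.one_le_iff_ne_zero.mpr hj)
                conv_lhs => rw [← h1]
                push_cast
                ring
              rw [hmj]
              have hrest : ∑ k ∈ Finset.univ.erase j, (m k : ℂ) * lam k
                  = ∑ k ∈ Finset.univ.erase j, (m' k : ℂ) * lam k := by
                refine Finset.sum_congr rfl fun k hk => ?_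
                rw [hm']
                simp [Finset.ne_of_mem_erase hk]
              rw [hrest]
              ring
            rw [this]
            push_cast
            ring
          by_cases hz : m' = 0
          · -- then m = single j 1, n small; direct candidate
            apply hmemcand 0 m (by omega) ?_ hpos
            intro k
            have hthis : (if k = j then m k - 1 else m k) = 0 := congrFun hz k
            by_cases hkj : k = j
            · rw [if_pos hkj] at hthis
              omega
            · rw [if_neg hkj] at hthis
              omega
          · have hpos' : 0 < (v 0 m').re := by
              have h1 : (v 0 m).re = (lam j).re + (v 0 m').re := by
                rw [hsplit, Complex.add_re]
              have := hLlam j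
              linarith
            have hn' : 0 + ∑ k, m' k < n := by
              have hsum : ∑ k, m k = (∑ k, m' k) + 1 := by
                have h1 : ∀ k ∈ Finset.univ, m k = m' k + (if k = j then 1 else 0) := by
                  intro k _
                  by_cases hkj : k = j
                  · subst hkj
                    simp [hm']
                    omega
                  · simp [hm', hkj]
                rw [Finset.sum_congr rfl h1, Finset.sum_add_distrib,
                    Finset.sum_ite_eq' Finset.univ j (fun _ => 1)]
                simp
              omega
            have hrec := ih _ hn' 0 m' rfl (fun h => hz h.2) hpos'
            rw [hsplit]
            exact insg_add (hmemG (lam j) (by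
              rw [hG]
              exact Finset.mem_insert_of_mem (Finset.mem_union_left _
                (Finset.mem_image.mpr ⟨j, Finset.mem_univ j, rfl⟩)))) hrec
        · -- peel off 1
          have hsplit : v m0 m = 1 + v (m0 - 1) m := by
            rw [hv]
            simp only
            have : (m0 : ℂ) = ((m0 - 1 : ℕ) : ℂ) + 1 := by
              have h1 : (m0 - 1) + 1 = m0 := Nat.succ_pred_eq_of_pos (Nat.pos_of_ne_zero h0)
              conv_lhs => rw [← h1]
              push_cast
              ring
            rw [this]
            ring
          by_cases hz : m0 - 1 = 0 ∧ m = 0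
          · apply hmemcand m0 m (by omega) (fun k => by
              have := congrFun hz.2 k
              simp at this
              omega) hpos
          · have hpos' : 0 < (v (m0 - 1) m).re := by
              have h1 : (v m0 m).re = 1 + (v (m0 - 1) m).re := by
                rw [hsplit, Complex.add_re, Complex.one_re]
              linarith
            have hn' : (m0 - 1) + ∑ k, m k < n := by omega
            have hrec := ih _ hn' (m0 - 1) m rfl hz hpos'
            rw [hsplit]
            exact insg_add (hmemG 1 (by rw [hG]; exact Finset.mem_insert_self _ _)) hrec
  intro z hz hposz
  obtain ⟨m0, m, hne, rfl⟩ := hz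
  have heq : -(lam ⟨N - 1, Nat.sub_lt hN one_pos⟩) - nu + ((m0 : ℂ) + ∑ k, (m k : ℂ) * lam k)
      = v m0 m := by
    rw [hv, hc]
    ring
  rw [heq] at hposz ⊢
  exact key (m0 + ∑ k, m k) m0 m rfl hne hposz
end
end

section
/- Lemma 5 (Vladimirov). Let G be the additive semigroup generated by complex numbers r_1, …, r_s all of whose real parts are positive. Then there exist complex numbers ρ_1, …, ρ_τ, linearly independent over ℤ, with Re ρ_i > 0 for all i, such that the additive semigroup Γ generated by ρ_1, …, ρ_τ contains G. -/
noncomputable section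

/-- The complex numbers `ρ 0, …, ρ (τ-1)` are linearly independent over `ℤ`. -/
def ZLinIndep {τ : ℕ} (ρ : Fin τ → ℂ) : Prop :=
  ∀ m : Fin τ → ℤ, (∑ i, (m i : ℂ) * ρ i) = 0 → m = 0

noncomputable section

def InSpanQ {τ : ℕ} (ρ : Fin τ → ℂ) (z : ℂ) : Prop :=
  ∃ q : Fin τ → ℚ, z = ∑ i, (q i : ℂ) * ρ i

def InConeQ {τ : ℕ} (ρ : Fin τ → ℂ) (z : ℂ) : Prop :=
  ∃ q : Fin τ → ℚ, (∀ i, 0 ≤ q i) ∧ z = ∑ i, (q i : ℂ) * ρ i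

def QIndep {τ : ℕ} (ρ : Fin τ → ℂ) : Prop :=
  ∀ q : Fin τ → ℚ, (∑ i, (q i : ℂ) * ρ i) = 0 → q = 0

lemma cone_trans {n m : ℕ} {ρ' : Fin m → ℂ} {d : Fin n → ℂ}
    (hd : ∀ j, InConeQ ρ' (d j)) {z : ℂ} (hz : InConeQ d z) : InConeQ ρ' z := by
  obtain ⟨a, ha0, haz⟩ := hz
  choose b hb0 hbz using hd
  refine ⟨fun i => ∑ j, a j * b j i, fun i => Finset.sum_nonneg fun j _ => mul_nonneg (ha0 j) (hb0 j i), ?_⟩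
  rw [haz]
  push_cast
  calc ∑ j, (a j : ℂ) * d j = ∑ j, ∑ i, ((a j : ℂ) * (b j i : ℂ)) * ρ' i := by
        refine Finset.sum_congr rfl fun j _ => ?_
        rw [hbz j, Finset.mul_sum]; ring_nf
    _ = ∑ i, (∑ j, (a j : ℂ) * (b j i : ℂ)) * ρ' i := by
        rw [Finset.sum_comm]
        exact Finset.sum_congr rfl fun i _ => (Finset.sum_mul ..).symm

lemma span_combo {n m : ℕ} {ρ : Fin m → ℂ} {d : Fin n → ℂ}
    (hd : ∀ j, InSpanQ ρ (d j)) (c : Fin n → ℚ) : InSpanQ ρ (∑ j, (c j : ℂ) * d j) := by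
  choose b hbz using hd
  refine ⟨fun i => ∑ j, c j * b j i, ?_⟩
  push_cast
  calc ∑ j, (c j : ℂ) * d j = ∑ j, ∑ i, ((c j : ℂ) * (b j i : ℂ)) * ρ i := by
        refine Finset.sum_congr rfl fun j _ => ?_
        rw [hbz j, Finset.mul_sum]; ring_nf
    _ = ∑ i, (∑ j, (c j : ℂ) * (b j i : ℂ)) * ρ i := by
        rw [Finset.sum_comm]
        exact Finset.sum_congr rfl fun i _ => (Finset.sum_mul ..).symm

lemma qindep_tail {n : ℕ} {ρ : Fin (n+1) → ℂ} (h : QIndep ρ) : QIndep (ρ ∘ Fin.succ) := by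
  intro c hc
  have h2 : (∑ i, ((Fin.cons 0 c : Fin (n+1) → ℚ) i : ℂ) * ρ i) = 0 := by
    rw [Fin.sum_univ_succ]
    simpa using hc
  have := h _ h2
  funext j
  have := congrFun this j.succ
  simpa using this

lemma qindep_comp_equiv {n : ℕ} {ρ : Fin n → ℂ} (h : QIndep ρ) (σ : Equiv.Perm (Fin n)) :
    QIndep (ρ ∘ σ) := by
  intro c hc
  have h2 : (∑ i, ((c ∘ σ.symm) i : ℂ) * ρ i) = 0 := by
    rw [← Equiv.sum_comp σ (fun i => ((c ∘ σ.symm) i : ℂ) * ρ i)]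
    simpa using hc
  have := h _ h2
  funext j
  have := congrFun this (σ j)
  simpa using this

lemma inspan_comp_equiv {n : ℕ} {ρ : Fin n → ℂ} (σ : Equiv.Perm (Fin n)) {z : ℂ}
    (h : InSpanQ (ρ ∘ σ) z) : InSpanQ ρ z := by
  obtain ⟨c, hc⟩ := h
  refine ⟨c ∘ σ.symm, ?_⟩
  rw [hc, ← Equiv.sum_comp σ (fun i => ((c ∘ σ.symm) i : ℂ) * ρ i)]
  simp

def KeyProp (n : ℕ) : Prop :=
  ∀ ρ : Fin n → ℂ, QIndep ρ → (∀ i, 0 < (ρ i).re) →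
    ∀ q : Fin n → ℚ, 0 < (∑ i, (q i : ℂ) * ρ i).re →
      ∃ ρ' : Fin n → ℂ, QIndep ρ' ∧ (∀ i, 0 < (ρ' i).re) ∧
        (∀ i, InSpanQ ρ (ρ' i)) ∧ (∀ i, InConeQ ρ' (ρ i)) ∧
        InConeQ ρ' (∑ i, (q i : ℂ) * ρ i)

lemma keyStep {n : ℕ} (IH : KeyProp n) (ρ : Fin (n+1) → ℂ) (hind : QIndep ρ)
    (hre : ∀ i, 0 < (ρ i).re) (q : Fin (n+1) → ℚ) (hq0 : q 0 < 0)
    (hq : 0 < (∑ i, (q i : ℂ) * ρ i).re) :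
    ∃ ρ' : Fin (n+1) → ℂ, QIndep ρ' ∧ (∀ i, 0 < (ρ' i).re) ∧
      (∀ i, InSpanQ ρ (ρ' i)) ∧ (∀ i, InConeQ ρ' (ρ i)) ∧
      InConeQ ρ' (∑ i, (q i : ℂ) * ρ i) := by
  set rest : Fin n → ℂ := ρ ∘ Fin.succ with hrest
  set qr : Fin n → ℚ := q ∘ Fin.succ with hqr
  set w : ℂ := ∑ j, (qr j : ℂ) * rest j with hw
  have hsplit : (∑ i, (q i : ℂ) * ρ i) = (q 0 : ℂ) * ρ 0 + w := by
    rw [Fin.sum_univ_succ]; rfl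
  have hre0 : 0 < (ρ 0).re := hre 0
  have hterm : ((q 0 : ℂ) * ρ 0).re = (q 0 : ℝ) * (ρ 0).re := by
    simp [Complex.mul_re]
  have hwre : 0 < w.re := by
    have h1 : (∑ i, (q i : ℂ) * ρ i).re = (q 0 : ℝ) * (ρ 0).re + w.re := by
      rw [hsplit, Complex.add_re, hterm]
    have h2 : (q 0 : ℝ) * (ρ 0).re < 0 :=
      mul_neg_of_neg_of_pos (by exact_mod_cast hq0) hre0
    nlinarith [hq, h1]
  obtain ⟨d, hdind, hdre, hdspan, hdcone, hwcone⟩ :=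
    IH rest (qindep_tail hind) (fun j => hre j.succ) qr hwre
  obtain ⟨wc, hwc0, hwcz⟩ := hwcone
  rw [← hw] at hwcz
  -- choose rational δ
  set R0 : ℝ := (ρ 0).re with hR0
  set t : Fin n → ℝ := fun j => (d j).re / R0 with ht
  have htpos : ∀ j, 0 < t j := fun j => div_pos (hdre j) hre0
  set S : ℝ := ∑ j, (wc j : ℝ) * t j with hS
  set c : ℚ := -q 0 with hc
  have hcpos : 0 < c := by simp [hc]; linarith
  have hSwre : S = w.re / R0 := by
    rw [hS, hwcz]

    push_cast
    rw [Complex.re_sum, Finset.sum_div]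
    refine Finset.sum_congr rfl fun j _ => ?_
    rw [ht]
    have : ((wc j : ℂ) * d j).re = (wc j : ℝ) * (d j).re := by simp [Complex.mul_re]
    rw [this, mul_div_assoc]
  have hSc : (c : ℝ) < S := by
    rw [hSwre, lt_div_iff₀ hre0]
    have h1 : (∑ i, (q i : ℂ) * ρ i).re = (q 0 : ℝ) * (ρ 0).re + w.re := by
      rw [hsplit, Complex.add_re, hterm]
    have : (c : ℝ) = -(q 0 : ℝ) := by push_cast [hc]; ring
    rw [this]
    nlinarith [hq, h1]
  set W : ℚ := ∑ j, wc j with hW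
  have hWnn : (0:ℝ) ≤ (W:ℝ) := by
    push_cast [hW]
    exact Finset.sum_nonneg fun j _ => by exact_mod_cast hwc0 j
  set ε : ℝ := (S - (c:ℝ)) / ((W:ℝ) + 1) with hε
  have hεpos : 0 < ε := div_pos (by linarith) (by linarith)
  have hδex : ∀ j : Fin n, ∃ δ : ℚ, max 0 (t j - ε) < (δ:ℝ) ∧ (δ:ℝ) < t j := by
    intro j
    exact exists_rat_btwn (by simp [lt_irrefl]; constructor <;> [exact htpos j; linarith])
  choose δ hδ1 hδ2 using hδex
  have hδpos : ∀ j, 0 < δ j := by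
    intro j
    have := lt_of_le_of_lt (le_max_left 0 (t j - ε)) (hδ1 j)
    exact_mod_cast this
  have hδre : ∀ j, (δ j : ℝ) * R0 < (d j).re := by
    intro j
    have := hδ2 j
    rw [ht, lt_div_iff₀ hre0] at this
    exact this
  have hδsum : c ≤ ∑ j, wc j * δ j := by
    have hreal : (c:ℝ) ≤ ∑ j, (wc j : ℝ) * (δ j : ℝ) := by
      have h1 : ∑ j, (wc j : ℝ) * (t j - ε) ≤ ∑ j, (wc j : ℝ) * (δ j : ℝ) := by
        refine Finset.sum_le_sum fun j _ => ?_
        have h2 : t j - ε ≤ (δ j : ℝ) :=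
          le_of_lt (lt_of_le_of_lt (le_max_right 0 (t j - ε)) (hδ1 j))
        exact mul_le_mul_of_nonneg_left h2 (by exact_mod_cast hwc0 j)
      have h3 : ∑ j, (wc j : ℝ) * (t j - ε) = S - (W:ℝ) * ε := by
        rw [hS]
        push_cast [hW]
        rw [Finset.sum_mul]
        rw [← Finset.sum_sub_distrib]
        refine Finset.sum_congr rfl fun j _ => by ring
      have h4 : S - (W:ℝ) * ε ≥ (c:ℝ) := by
        have : ((W:ℝ)+1) * ε = S - c := by
          rw [hε]; field_simp
        nlinarith [hεpos, hWnn]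
      linarith
    exact_mod_cast hreal
  -- define the new family
  set ρ' : Fin (n+1) → ℂ := Fin.cons (ρ 0) (fun j => d j - (δ j : ℂ) * ρ 0) with hρ'
  have hρ'0 : ρ' 0 = ρ 0 := rfl
  have hρ's : ∀ j, ρ' j.succ = d j - (δ j : ℂ) * ρ 0 := fun j => rfl
  -- d j in cone of ρ'
  have hdcone' : ∀ j, InConeQ ρ' (d j) := by
    intro j
    refine ⟨Fin.cons (δ j) (fun i => if i = j then 1 else 0), ?_, ?_⟩
    · intro i
      refine Fin.cases ?_ ?_ i
      · simpa using le_of_lt (hδpos j)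
      · intro i; simp only [Fin.cons_succ]; split <;> norm_num
    · rw [Fin.sum_univ_succ]
      simp only [Fin.cons_succ, Fin.cons_zero]
      have hrw : ∀ i : Fin n, ((if i = j then (1:ℚ) else 0 : ℚ):ℂ) * ρ' i.succ
          = if i = j then (1:ℂ) * ρ' i.succ else 0 := by
        intro i; split_ifs <;> simp
      rw [Finset.sum_congr rfl (fun i _ => hrw i)]
      rw [Finset.sum_ite_eq' Finset.univ j (fun i => (1:ℂ) * ρ' i.succ)]
      simp [hρ's]
      rw [hρ'0]; ring
  have hexp : ∀ cf : Fin (n+1) → ℚ, (∑ i, (cf i : ℂ) * ρ' i) =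
      ((cf 0 - ∑ j, cf j.succ * δ j : ℚ) : ℂ) * ρ 0 + ∑ j, (cf j.succ : ℂ) * d j := by
    intro cf
    have e1 : ∀ j : Fin n, (cf j.succ : ℂ) * (d j - (δ j:ℂ) * ρ 0)
        = (cf j.succ : ℂ) * d j - ((cf j.succ : ℚ) * (δ j : ℚ) : ℚ) * ρ 0 := fun j => by
      push_cast; ring
    rw [Fin.sum_univ_succ]
    simp only [hρ'0, hρ's]
    rw [Finset.sum_congr rfl fun j _ => e1 j, Finset.sum_sub_distrib, ← Finset.sum_mul]
    push_cast
    ring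
  refine ⟨ρ', ?_, ?_, ?_, ?_, ?_⟩
  · -- QIndep
    intro cf hcf
    have h0 : ((cf 0 - ∑ j, cf j.succ * δ j : ℚ) : ℂ) * ρ 0 + ∑ j, (cf j.succ : ℂ) * d j = 0 := by
      rw [← hexp cf]; exact hcf
    obtain ⟨e, he⟩ := span_combo hdspan (fun j => cf j.succ)
    have he' : (∑ j, (cf j.succ : ℂ) * d j) = ∑ i, (e i : ℂ) * ρ i.succ := he
    have hfull : (∑ i, ((Fin.cons (cf 0 - ∑ j, cf j.succ * δ j) e : Fin (n+1) → ℚ) i : ℂ) * ρ i) = 0 := by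
      rw [Fin.sum_univ_succ]
      simp only [Fin.cons_zero, Fin.cons_succ]
      rw [← he']
      exact h0
    have hz := hind _ hfull
    have ha : cf 0 - ∑ j, cf j.succ * δ j = 0 := by
      have := congrFun hz 0; simpa using this
    have h1 : (∑ j, (cf j.succ : ℂ) * d j) = 0 := by
      rw [ha] at h0; simpa using h0
    have h2 := hdind (fun j => cf j.succ) h1
    funext i
    refine Fin.cases ?_ ?_ i
    · have hs : ∀ j : Fin n, cf j.succ = 0 := fun j => congrFun h2 j
      have : cf 0 - ∑ j, cf j.succ * δ j = 0 := ha
      simp only [hs, zero_mul, Finset.sum_const_zero, sub_zero] at this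
      simpa using this
    · intro j
      simpa using congrFun h2 j
  · -- positive real parts
    intro i
    refine Fin.cases ?_ ?_ i
    · rw [hρ'0]; exact hre0
    · intro j
      have hre' : (ρ' j.succ).re = (d j).re - (δ j : ℝ) * R0 := by
        rw [hρ's]; simp [Complex.sub_re, Complex.mul_re, hR0]
      rw [hre']
      linarith [hδre j]
  · -- span
    intro i
    refine Fin.cases ?_ ?_ i
    · refine ⟨Fin.cons 1 0, ?_⟩
      rw [Fin.sum_univ_succ]
      simp [hρ'0]
    · intro j
      obtain ⟨b, hb⟩ := hdspan j
      have hb' : d j = ∑ i, (b i : ℂ) * ρ i.succ := hb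
      refine ⟨Fin.cons (-(δ j)) b, ?_⟩
      rw [Fin.sum_univ_succ]
      simp only [Fin.cons_zero, Fin.cons_succ]
      rw [← hb', hρ's]
      push_cast
      ring
  · -- cone contains old generators
    intro i
    refine Fin.cases ?_ ?_ i
    · refine ⟨Fin.cons 1 0, fun i => Fin.cases (by norm_num) (by simp) i, ?_⟩
      rw [Fin.sum_univ_succ]
      simp [hρ'0]
    · intro j
      exact cone_trans hdcone' (hdcone j)
  · -- cone contains the combination
    refine ⟨Fin.cons (q 0 + ∑ j, wc j * δ j) wc, ?_, ?_⟩
    · intro i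
      refine Fin.cases ?_ ?_ i
      · simp only [Fin.cons_zero]
        have h5 : c ≤ ∑ j, wc j * δ j := hδsum
        rw [hc] at h5
        linarith
      · intro j; simpa using hwc0 j
    · rw [hsplit, hwcz, Fin.sum_univ_succ]
      simp only [Fin.cons_zero, Fin.cons_succ, hρ'0, hρ's]
      have e2 : ∀ j : Fin n, (wc j : ℂ) * (d j - (δ j:ℂ) * ρ 0)
          = (wc j : ℂ) * d j - ((wc j : ℚ) * (δ j : ℚ) : ℚ) * ρ 0 := fun j => by
        push_cast; ring
      rw [Finset.sum_congr rfl fun j _ => e2 j, Finset.sum_sub_distrib, ← Finset.sum_mul]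
      push_cast
      ring

lemma self_cone {τ : ℕ} (ρ : Fin τ → ℂ) (i : Fin τ) : InConeQ ρ (ρ i) := by
  refine ⟨fun k => if k = i then 1 else 0, fun k => by dsimp only; split <;> norm_num, ?_⟩
  have hrw : ∀ k : Fin τ, ((if k = i then (1:ℚ) else 0 : ℚ) : ℂ) * ρ k
      = if k = i then (1:ℂ) * ρ k else 0 := fun k => by split_ifs <;> simp
  rw [Finset.sum_congr rfl fun k _ => hrw k,
    Finset.sum_ite_eq' Finset.univ i (fun k => (1:ℂ) * ρ k)]
  simp

lemma cone_to_span {τ : ℕ} {ρ : Fin τ → ℂ} {z : ℂ} (h : InConeQ ρ z) : InSpanQ ρ z :=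
  ⟨h.choose, h.choose_spec.2⟩

lemma key : ∀ n, KeyProp n := by
  intro n
  induction n with
  | zero =>
    intro ρ hind hre q hq
    exfalso
    simp at hq
  | succ n IH =>
    intro ρ hind hre q hq
    by_cases hneg : ∀ i, 0 ≤ q i
    · exact ⟨ρ, hind, hre, fun i => cone_to_span (self_cone ρ i), self_cone ρ, ⟨q, hneg, rfl⟩⟩
    · push_neg at hneg
      obtain ⟨i0, hi0⟩ := hneg
      set σ : Equiv.Perm (Fin (n+1)) := Equiv.swap 0 i0 with hσ
      have hσ0 : σ 0 = i0 := Equiv.swap_apply_left 0 i0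
      have hsum : (∑ i, ((q ∘ σ) i : ℂ) * (ρ ∘ σ) i) = ∑ i, (q i : ℂ) * ρ i :=
        Equiv.sum_comp σ (fun i => (q i : ℂ) * ρ i)
      obtain ⟨ρ', h1, h2, h3, h4, h5⟩ := keyStep IH (ρ ∘ σ) (qindep_comp_equiv hind σ)
        (fun i => hre (σ i)) (q ∘ σ) (by simpa [hσ0] using hi0) (by rw [hsum]; exact hq)
      refine ⟨ρ', h1, h2, fun i => inspan_comp_equiv σ (h3 i), fun i => ?_, by rwa [hsum] at h5⟩
      have := h4 (σ.symm i)
      simpa using this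

lemma mainQ : ∀ s : ℕ, ∀ r : Fin s → ℂ, (∀ i, 0 < (r i).re) →
    ∃ τ : ℕ, ∃ ρ : Fin τ → ℂ, QIndep ρ ∧ (∀ i, 0 < (ρ i).re) ∧ ∀ i, InConeQ ρ (r i) := by
  intro s
  induction s with
  | zero =>
    intro r hre
    exact ⟨0, Fin.elim0, fun q _ => funext fun i => i.elim0, fun i => i.elim0, fun i => i.elim0⟩
  | succ s IH =>
    intro r hre
    obtain ⟨τ, ρ, hind, hρre, hcone⟩ := IH (r ∘ Fin.succ) (fun i => hre i.succ)
    by_cases hx : InSpanQ ρ (r 0)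
    · obtain ⟨qc, hqc⟩ := hx
      have hq : 0 < (∑ i, (qc i : ℂ) * ρ i).re := by rw [← hqc]; exact hre 0
      obtain ⟨ρ', h1, h2, h3, h4, h5⟩ := key τ ρ hind hρre qc hq
      refine ⟨τ, ρ', h1, h2, fun i => ?_⟩
      refine Fin.cases ?_ ?_ i
      · rw [hqc]; exact h5
      · intro j; exact cone_trans h4 (hcone j)
    · refine ⟨τ+1, Fin.cons (r 0) ρ, ?_, ?_, ?_⟩
      · intro cf hcf
        have hs : (cf 0 : ℂ) * r 0 + ∑ j, (cf j.succ : ℂ) * ρ j = 0 := by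
          rw [← hcf, Fin.sum_univ_succ]; simp
        by_cases h0 : cf 0 = 0
        · rw [h0] at hs
          simp only [Rat.cast_zero, zero_mul, zero_add] at hs
          have h2 := hind (fun j => cf j.succ) hs
          funext i
          refine Fin.cases ?_ ?_ i
          · simpa using h0
          · intro j; simpa using congrFun h2 j
        · exfalso
          apply hx
          refine ⟨fun j => -(cf j.succ) / cf 0, ?_⟩
          have hc0 : (cf 0 : ℂ) ≠ 0 := by exact_mod_cast h0
          have h7 : ∑ j, ((-(cf j.succ) / cf 0 : ℚ) : ℂ) * ρ j
              = (∑ j, -((cf j.succ : ℂ) * ρ j)) / (cf 0 : ℂ) := by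
            rw [Finset.sum_div]
            refine Finset.sum_congr rfl fun j _ => ?_
            push_cast
            field_simp
          have h6 : (∑ j, -((cf j.succ : ℂ) * ρ j)) = (cf 0 : ℂ) * r 0 := by
            rw [Finset.sum_neg_distrib]
            linear_combination -hs
          rw [h7, h6]
          field_simp
      · intro i
        refine Fin.cases ?_ ?_ i
        · exact hre 0
        · intro j; simpa using hρre j
      · intro i
        refine Fin.cases ?_ ?_ i
        · simpa using self_cone (Fin.cons (r 0) ρ) 0
        · intro j
          have hd : ∀ k, InConeQ (Fin.cons (r 0) ρ : Fin (τ+1) → ℂ) (ρ k) := fun k => by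
            simpa using self_cone (Fin.cons (r 0) ρ) k.succ
          exact cone_trans hd (hcone j)

/-- **Lemma 5 (Vladimirov).**  Let `G` be the additive semigroup generated by complex
numbers `r_1, …, r_s` with positive real parts.  Then there exist complex numbers
`ρ_1, …, ρ_τ`, linearly independent over `ℤ` and with positive real parts, such that
the additive semigroup they generate contains `G`. -/
theorem lemma5_vladimirov {s : ℕ} (r : Fin s → ℂ) (hre : ∀ i, 0 < (r i).re) :
    ∃ τ : ℕ, ∃ ρ : Fin τ → ℂ, ZLinIndep ρ ∧ (∀ i, 0 < (ρ i).re) ∧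
      ∀ z : ℂ, InSemigroup r z → InSemigroup ρ z := by
  obtain ⟨τ, ρ, hind, hρre, hcone⟩ := mainQ s r hre
  choose qc hqc0 hqc1 using hcone
  set N : ℕ := ∏ i, ∏ j, (qc i j).den with hN
  have hNpos : 0 < N :=
    Finset.prod_pos fun i _ => Finset.prod_pos fun j _ => (qc i j).pos
  have hNne : ((N:ℚ)) ≠ 0 := by positivity
  have hNneC : ((N:ℂ)) ≠ 0 := Nat.cast_ne_zero.mpr hNpos.ne'
  have hNden : ∀ i j, (qc i j).den ∣ N := fun i j =>
    dvd_trans (Finset.dvd_prod_of_mem (fun j' => (qc i j').den) (Finset.mem_univ j))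
      (Finset.dvd_prod_of_mem (fun i' => ∏ j', (qc i' j').den) (Finset.mem_univ i))
  set mc : Fin s → Fin τ → ℕ := fun i j => (qc i j).num.toNat * (N / (qc i j).den) with hmc
  have hmcq : ∀ i j, ((mc i j : ℚ)) = qc i j * N := by
    intro i j
    have hk : ((qc i j).den : ℚ) * ((N / (qc i j).den : ℕ) : ℚ) = (N : ℚ) := by
      rw [← Nat.cast_mul, Nat.mul_div_cancel' (hNden i j)]
    have hnum : (((qc i j).num.toNat : ℤ)) = (qc i j).num :=
      Int.toNat_of_nonneg (Rat.num_nonneg.2 (hqc0 i j))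
    calc ((mc i j : ℚ)) = ((qc i j).num.toNat : ℚ) * ((N / (qc i j).den : ℕ) : ℚ) := by
          rw [hmc]; push_cast; ring
      _ = ((qc i j).num : ℚ) * ((N / (qc i j).den : ℕ) : ℚ) := by
          congr 1; exact_mod_cast hnum
      _ = (qc i j * (qc i j).den) * ((N / (qc i j).den : ℕ) : ℚ) := by
          rw [show ((qc i j).num : ℚ) = qc i j * (qc i j).den by
            exact_mod_cast (Rat.mul_den_eq_num (qc i j)).symm]
      _ = qc i j * N := by rw [mul_assoc, hk]
  refine ⟨τ, fun j => ρ j / (N:ℂ), ?_, ?_, ?_⟩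
  · -- ZLinIndep
    intro mz hmz
    have h1 : (∑ j, (((mz j : ℚ) / N : ℚ) : ℂ) * ρ j) = 0 := by
      rw [← hmz]
      refine Finset.sum_congr rfl fun j _ => ?_
      push_cast
      field_simp
    have h2 := hind _ h1
    funext j
    have h3 : (mz j : ℚ) / N = 0 := congrFun h2 j
    field_simp at h3
    exact_mod_cast h3
  · intro j
    have : (ρ j / (N:ℂ)).re = (ρ j).re / (N:ℝ) := by
      rw [show ((N:ℂ)) = ((N:ℝ):ℂ) by push_cast; ring, Complex.div_ofReal_re]
    rw [this]
    exact div_pos (hρre j) (by exact_mod_cast hNpos)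
  · rintro z ⟨mm, hmm0, hmmz⟩
    set M : Fin τ → ℕ := fun j => ∑ i, mm i * mc i j with hM
    have hz : z = ∑ j, (M j : ℂ) * (ρ j / (N:ℂ)) := by
      calc z = ∑ i, (mm i : ℂ) * r i := hmmz
        _ = ∑ i, ∑ j, ((mm i : ℂ) * (qc i j : ℂ)) * ρ j := by
            refine Finset.sum_congr rfl fun i _ => ?_
            rw [hqc1 i, Finset.mul_sum]
            exact Finset.sum_congr rfl fun j _ => by ring
        _ = ∑ j, ∑ i, ((mm i : ℂ) * (qc i j : ℂ)) * ρ j := Finset.sum_comm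
        _ = ∑ j, (M j : ℂ) * (ρ j / (N:ℂ)) := by
            refine Finset.sum_congr rfl fun j _ => ?_
            have h5 : ((M j : ℚ)) = (∑ i, (mm i : ℚ) * qc i j) * N := by
              rw [hM]
              push_cast
              rw [Finset.sum_mul]
              refine Finset.sum_congr rfl fun i _ => ?_
              rw [hmcq i j]
              ring
            have h6 : ((M j : ℂ)) = (∑ i, (mm i : ℂ) * (qc i j : ℂ)) * (N : ℂ) := by
              exact_mod_cast congrArg (fun q : ℚ => (q : ℂ)) h5
            rw [h6, ← Finset.sum_mul]
            field_simp
    have hrez : 0 < z.re := by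
      rw [hmmz, Complex.re_sum]
      obtain ⟨i0, hi0⟩ := Function.ne_iff.1 hmm0
      have hterm : ∀ i, ((mm i : ℂ) * r i).re = (mm i : ℝ) * (r i).re := by
        intro i; simp [Complex.mul_re]
      rw [Finset.sum_congr rfl fun i _ => hterm i]
      refine Finset.sum_pos' (fun i _ => mul_nonneg (by positivity) (le_of_lt (hre i))) ?_
      refine ⟨i0, Finset.mem_univ i0, ?_⟩
      have : 0 < (mm i0 : ℝ) := by
        have : 0 < mm i0 := Nat.pos_of_ne_zero hi0
        exact_mod_cast this
      exact mul_pos this (hre i0)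
    refine ⟨M, ?_, hz⟩
    intro hM0
    rw [hM0] at hz
    simp at hz
    rw [hz] at hrez
    simp at hrez
end
end
end
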